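/- Let f : ℝ² × ℝ² → [0,∞) be measurable with f(x,v) ≤ M for almost every (x,v), and set ρ(x) = ∫_{ℝ²} f(x,v) dv and K = ∫_{ℝ²}∫_{ℝ²} |v|² f(x,v) dx dv. Then ∫_{ℝ²} ρ(x)² dx ≤ 4π M K; in particular ‖ρ‖_{L²(ℝ²)} ≤ 2√π M^{1/2} K^{1/2}. -/

import Mathlib

open MeasureTheory
open scoped ENNReal
noncomputable abbrev R2 : Type := EuclideanSpace ℝ (Fin 2)

lemma vol_ball2 (R : ℝ) (hR : 0 ≤ R) :
    volume (Metric.ball (0:R2) R) = ENNReal.ofReal (Real.pi * R^2) := by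
  rw [EuclideanSpace.volume_ball]
  simp only [Fintype.card_fin]
  rw [show ((2:ℕ):ℝ)/2 + 1 = 2 by push_cast; norm_num, Real.Gamma_two,
    Real.sq_sqrt Real.pi_pos.le,
    ← ENNReal.ofReal_pow hR, ← ENNReal.ofReal_mul (by positivity)]
  ring_nf

theorem density_L2_interpolation (f : R2 × R2 → ℝ) (hmeas : Measurable f)
    (hpos : ∀ z, 0 ≤ f z) (M : ℝ) (hbdd : ∀ᵐ z ∂volume, f z ≤ M)
    (ρ : R2 → ℝ≥0∞) (hρ : ∀ x, ρ x = ∫⁻ v, ENNReal.ofReal (f (x, v)))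
    (K : ℝ≥0∞) (hK : K = ∫⁻ x, ∫⁻ v, ENNReal.ofReal (‖v‖ ^ 2 * f (x, v))) :
    (∫⁻ x, ρ x ^ 2) ≤ ENNReal.ofReal (4 * Real.pi * M) * K ∧
      (∫⁻ x, ρ x ^ 2) ^ (1 / 2 : ℝ)
        ≤ ENNReal.ofReal (2 * Real.sqrt Real.pi * Real.sqrt M) * K ^ (1 / 2 : ℝ) := by
  have hM : 0 ≤ M := by
    obtain ⟨z, hz⟩ := hbdd.exists
    exact le_trans (hpos z) hz
  set g : R2 → ℝ≥0∞ := fun x => ∫⁻ v, ENNReal.ofReal (‖v‖ ^ 2 * f (x, v)) with hg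
  have hgmeas : Measurable g :=
    Measurable.lintegral_prod_right'
      (((measurable_snd.norm.pow measurable_const).mul hmeas).ennreal_ofReal)
  have hbdd' : ∀ᵐ z ∂((volume : Measure R2).prod (volume : Measure R2)), f z ≤ M := by
    rw [← Measure.volume_eq_prod]; exact hbdd
  have hae : ∀ᵐ x : R2, ∀ᵐ v : R2, f (x, v) ≤ M := Measure.ae_ae_of_ae_prod hbdd'
  -- key pointwise estimate
  have key : ∀ᵐ x : R2, ρ x ^ 2 ≤ ENNReal.ofReal (4 * Real.pi * M) * g x := by
    filter_upwards [hae] with x hx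
    have hfm : Measurable fun v : R2 => ENNReal.ofReal (f (x, v)) :=
      (hmeas.comp measurable_prodMk_left).ennreal_ofReal
    have hvm : Measurable fun v : R2 => ENNReal.ofReal (‖v‖ ^ 2 * f (x, v)) :=
      ((measurable_norm.pow measurable_const).mul
        (hmeas.comp measurable_prodMk_left)).ennreal_ofReal
    rcases eq_or_lt_of_le hM with hM0 | hM0
    · -- M = 0 : ρ x = 0
      have : ρ x = 0 := by
        rw [hρ, lintegral_eq_zero_iff hfm]
        filter_upwards [hx] with v hv
        simp [le_antisymm (hM0 ▸ hv) (hpos (x, v))]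
      simp [this]
    -- M > 0
    have hRbound : ∀ R : ℝ, 0 < R →
        ρ x ≤ ENNReal.ofReal (Real.pi * M * R^2) + ENNReal.ofReal (1 / R^2) * g x := by
      intro R hR
      have hsplit : ρ x = (∫⁻ v in Metric.ball (0:R2) R, ENNReal.ofReal (f (x, v)))
          + ∫⁻ v in (Metric.ball (0:R2) R)ᶜ, ENNReal.ofReal (f (x, v)) := by
        rw [hρ, lintegral_add_compl _ measurableSet_ball]
      rw [hsplit]
      gcongr
      · -- ball part
        calc (∫⁻ v in Metric.ball (0:R2) R, ENNReal.ofReal (f (x, v)))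
            ≤ ∫⁻ _ in Metric.ball (0:R2) R, ENNReal.ofReal M := by
              refine lintegral_mono_ae ?_
              filter_upwards [ae_restrict_of_ae hx] with v hv
              exact ENNReal.ofReal_le_ofReal hv
          _ = ENNReal.ofReal M * volume (Metric.ball (0:R2) R) := by
              rw [setLIntegral_const]
          _ = ENNReal.ofReal (Real.pi * M * R^2) := by
              rw [vol_ball2 R hR.le, ← ENNReal.ofReal_mul hM]
              ring_nf
      · -- tail part
        calc (∫⁻ v in (Metric.ball (0:R2) R)ᶜ, ENNReal.ofReal (f (x, v)))
            ≤ ∫⁻ v in (Metric.ball (0:R2) R)ᶜ,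
                ENNReal.ofReal (1 / R^2) * ENNReal.ofReal (‖v‖^2 * f (x, v)) := by
              refine setLIntegral_mono (Measurable.const_mul hvm _) ?_
              intro v hv
              have hRv : R ≤ ‖v‖ := by
                simp only [Metric.mem_ball, Set.mem_compl_iff, not_lt, dist_zero_right] at hv
                exact hv
              rw [← ENNReal.ofReal_mul (by positivity)]
              refine ENNReal.ofReal_le_ofReal ?_
              have h1 : R^2 * f (x, v) ≤ ‖v‖^2 * f (x, v) :=
                mul_le_mul_of_nonneg_right (pow_le_pow_left₀ hR.le hRv 2) (hpos (x, v))
              rw [div_mul_eq_mul_div, one_mul, le_div_iff₀ (by positivity)]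
              nlinarith [hpos (x, v)]
          _ = ENNReal.ofReal (1 / R^2) *
                ∫⁻ v in (Metric.ball (0:R2) R)ᶜ, ENNReal.ofReal (‖v‖^2 * f (x, v)) := by
              rw [lintegral_const_mul _ hvm]
          _ ≤ ENNReal.ofReal (1 / R^2) * g x := by
              gcongr
              exact setLIntegral_le_lintegral _ _
    rcases eq_or_ne (g x) 0 with hg0 | hg0
    · -- g x = 0 : ρ x = 0
      have hρ0 : ρ x = 0 := by
        refine le_antisymm ?_ zero_le
        refine ENNReal.le_of_forall_pos_le_add fun ε hε _ => ?_
        have hεpos : (0:ℝ) < ε := hε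
        have hRpos : 0 < Real.sqrt (ε / (Real.pi * M)) := Real.sqrt_pos.mpr (by positivity)
        have hb := hRbound _ hRpos
        rw [hg0, mul_zero, add_zero, Real.sq_sqrt (by positivity),
          mul_div_cancel₀ _ (by positivity)] at hb
        refine le_trans hb ?_
        rw [zero_add]
        simp
      simp [hρ0]
    rcases eq_or_ne (g x) ∞ with hgtop | hgtop
    · rw [hgtop, ENNReal.mul_top (by positivity)]
      exact le_top
    -- main case: 0 < g x < ∞
    set b : ℝ := (g x).toReal with hbdef
    have hb : 0 < b := ENNReal.toReal_pos hg0 hgtop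
    set c : ℝ := Real.pi * M with hcdef
    have hc : 0 < c := by positivity
    set R : ℝ := Real.sqrt (Real.sqrt b / Real.sqrt c) with hRdef
    have hRpos : 0 < R := Real.sqrt_pos.mpr (by positivity)
    have hR2 : R^2 = Real.sqrt b / Real.sqrt c := Real.sq_sqrt (by positivity)
    have hsb : (0:ℝ) < Real.sqrt b := Real.sqrt_pos.mpr hb
    have hsc : (0:ℝ) < Real.sqrt c := Real.sqrt_pos.mpr hc
    have h1 : c * R^2 = Real.sqrt c * Real.sqrt b := by
      rw [hR2]
      rw [show c * (Real.sqrt b / Real.sqrt c) = c / Real.sqrt c * Real.sqrt b by ring,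
        Real.div_sqrt]
    have hR2' : 1 / R^2 = Real.sqrt c / Real.sqrt b := by
      rw [hR2, one_div_div]
    have h2 : (1 / R^2) * b = Real.sqrt c * Real.sqrt b := by
      rw [hR2', show Real.sqrt c / Real.sqrt b * b = Real.sqrt c * (b / Real.sqrt b) by ring,
        Real.div_sqrt]
    have hgb : g x = ENNReal.ofReal b := (ENNReal.ofReal_toReal hgtop).symm
    have hρb : ρ x ≤ ENNReal.ofReal (2 * (Real.sqrt c * Real.sqrt b)) := by
      refine le_trans (hRbound R hRpos) ?_
      rw [hgb, ← ENNReal.ofReal_mul (by positivity),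
        ← ENNReal.ofReal_add (by positivity) (by positivity)]
      refine ENNReal.ofReal_le_ofReal (le_of_eq ?_)
      rw [show Real.pi * M * R^2 = c * R^2 from rfl, h1, h2]; ring
    calc ρ x ^ 2 ≤ ENNReal.ofReal (2 * (Real.sqrt c * Real.sqrt b)) ^ 2 := by gcongr
      _ = ENNReal.ofReal ((2 * (Real.sqrt c * Real.sqrt b))^2) := by
          rw [ENNReal.ofReal_pow (by positivity)]
      _ = ENNReal.ofReal (4 * Real.pi * M) * g x := by
          rw [hgb, ← ENNReal.ofReal_mul (by positivity)]
          congr 1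
          rw [mul_pow, mul_pow, Real.sq_sqrt hc.le, Real.sq_sqrt hb.le, hcdef]
          ring
  have main : (∫⁻ x, ρ x ^ 2) ≤ ENNReal.ofReal (4 * Real.pi * M) * K := by
    calc (∫⁻ x, ρ x ^ 2) ≤ ∫⁻ x, ENNReal.ofReal (4 * Real.pi * M) * g x :=
        lintegral_mono_ae key
      _ = ENNReal.ofReal (4 * Real.pi * M) * ∫⁻ x, g x := lintegral_const_mul _ hgmeas
      _ = ENNReal.ofReal (4 * Real.pi * M) * K := by rw [hK]
  refine ⟨main, ?_⟩
  calc (∫⁻ x, ρ x ^ 2) ^ (1/2 : ℝ)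
      ≤ (ENNReal.ofReal (4 * Real.pi * M) * K) ^ (1/2 : ℝ) :=
        ENNReal.rpow_le_rpow main (by norm_num)
    _ = ENNReal.ofReal (4 * Real.pi * M) ^ (1/2:ℝ) * K ^ (1/2:ℝ) :=
        ENNReal.mul_rpow_of_nonneg _ _ (by norm_num)
    _ = ENNReal.ofReal (2 * Real.sqrt Real.pi * Real.sqrt M) * K ^ (1/2:ℝ) := by
        congr 1
        rw [ENNReal.ofReal_rpow_of_nonneg (by positivity) (by norm_num),
          ← Real.sqrt_eq_rpow,
          show 4 * Real.pi * M = (2 * Real.sqrt Real.pi * Real.sqrt M)^2 by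
            rw [mul_pow, mul_pow, Real.sq_sqrt Real.pi_pos.le, Real.sq_sqrt hM]; ring,
          Real.sqrt_sq (by positivity)]
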